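/- Let p ∈ (0,1) and x > 0, and define H_p(x) = ∫_0^1 (1 - (1-p+pt)^x)/(1-t) dt. Then ψ(x+1) + γ + ln p ≤ H_p(x) ≤ ψ(x+1) + γ. -/

import Mathlib

open Real MeasureTheory Set Filter Topology intervalIntegral

noncomputable def digamma (x : ℝ) : ℝ := deriv (fun y => Real.log (Real.Gamma y)) x

noncomputable def Hp (p x : ℝ) : ℝ := ∫ t in (0:ℝ)..1, (1 - (1 - p + p * t) ^ x) / (1 - t)



namespace HpProof

noncomputable def g (x u : ℝ) : ℝ := (1 - u ^ x) / (1 - u)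

lemma rpow_anti {u x y : ℝ} (hu : u ∈ Icc (0:ℝ) 1) (hx : 0 ≤ x) (hxy : x ≤ y) :
    u ^ y ≤ u ^ x := by
  rcases eq_or_lt_of_le hu.1 with rfl | hu0
  · rcases eq_or_lt_of_le hx with rfl | hx0
    · rw [Real.rpow_zero]
      exact Real.rpow_le_one le_rfl zero_le_one (by linarith)
    · rw [Real.zero_rpow hx0.ne', Real.zero_rpow (by linarith : y ≠ 0)]
  · exact Real.rpow_le_rpow_of_exponent_ge hu0 hu.2 hxy

lemma g_nonneg {x : ℝ} (hx : 0 ≤ x) {u : ℝ} (hu : u ∈ Icc (0:ℝ) 1) : 0 ≤ g x u :=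
  div_nonneg (by linarith [Real.rpow_le_one hu.1 hu.2 hx]) (by linarith [hu.2])

lemma g_mono {x y : ℝ} (hx : 0 ≤ x) (hxy : x ≤ y) {u : ℝ} (hu : u ∈ Icc (0:ℝ) 1) :
    g x u ≤ g y u := by
  rcases eq_or_lt_of_le hu.2 with rfl | hu1
  · simp [g]
  · unfold g
    rw [div_le_div_iff_of_pos_right (by linarith : (0:ℝ) < 1 - u)]
    linarith [rpow_anti hu hx hxy]

lemma g_le_max {x : ℝ} (hx : 0 ≤ x) {u : ℝ} (hu : u ∈ Icc (0:ℝ) 1) : g x u ≤ max 1 x := by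
  rcases eq_or_lt_of_le hu.2 with rfl | hu1
  · simp [g]
  · rw [g, div_le_iff₀ (by linarith)]
    rcases le_total x 1 with h | h
    · have h1 : u ^ (1:ℝ) ≤ u ^ x := rpow_anti hu hx h
      rw [Real.rpow_one] at h1
      have hmax : (1:ℝ) ≤ max 1 x := le_max_left _ _
      nlinarith [hu.2]
    · have hb := one_add_mul_self_le_rpow_one_add (s := u - 1) (by linarith [hu.1]) h
      have h1 : 1 + x * (u - 1) ≤ u ^ x := by
        have : (1:ℝ) + (u - 1) = u := by ring
        rwa [this] at hb
      have hmax : x ≤ max 1 x := le_max_right _ _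
      nlinarith [hu.2]

lemma g_meas {x : ℝ} (hx : 0 ≤ x) : Measurable (g x) :=
  (measurable_const.sub (Real.continuous_rpow_const hx).measurable).div
    (measurable_const.sub measurable_id)

end HpProof

namespace HpProof

lemma g_intInt {x : ℝ} (hx : 0 ≤ x) : IntervalIntegrable (g x) volume 0 1 := by
  apply IntervalIntegrable.mono_fun'
    (intervalIntegrable_const : IntervalIntegrable (fun _ => max 1 x) volume 0 1)
  · exact ((g_meas hx).aestronglyMeasurable).restrict
  · rw [Set.uIoc_of_le (zero_le_one' ℝ)]
    filter_upwards [ae_restrict_mem measurableSet_Ioc] with u hu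
    have hu' : u ∈ Icc (0:ℝ) 1 := ⟨hu.1.le, hu.2⟩
    rw [Real.norm_eq_abs, abs_of_nonneg (g_nonneg hx hu')]
    exact g_le_max hx hu'

noncomputable def F (x : ℝ) : ℝ := ∫ u in (0:ℝ)..1, g x u

lemma F_zero : F 0 = 0 := by
  simp [F, g]

lemma F_mono {x y : ℝ} (hx : 0 ≤ x) (hxy : x ≤ y) : F x ≤ F y :=
  intervalIntegral.integral_mono_on zero_le_one (g_intInt hx) (g_intInt (hx.trans hxy))
    (fun u hu => g_mono hx hxy hu)

lemma ae_ne_one : ∀ᵐ u : ℝ ∂volume, u ≠ 1 := by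
  rw [MeasureTheory.ae_iff]
  simpa using Real.volume_singleton (a := 1)

lemma F_rec {x : ℝ} (hx : 0 ≤ x) : F (x + 1) = F x + (x + 1)⁻¹ := by
  have hint : ∫ u in (0:ℝ)..1, (g (x+1) u - g x u) = ∫ u in (0:ℝ)..1, u ^ x := by
    apply intervalIntegral.integral_congr_ae
    filter_upwards [ae_ne_one] with u hu1 hu
    rw [Set.uIoc_of_le (zero_le_one' ℝ)] at hu
    have hu0 : 0 < u := hu.1
    have h1u : 1 - u ≠ 0 := by
      intro h; exact hu1 (by linarith)
    have hadd : u ^ (x + 1) = u ^ x * u := by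
      rw [Real.rpow_add hu0, Real.rpow_one]
    unfold g
    rw [div_sub_div_same, hadd]
    rw [show 1 - u ^ x * u - (1 - u ^ x) = u ^ x * (1 - u) by ring]
    rw [mul_div_assoc, div_self h1u, mul_one]
  have h2 : ∫ u in (0:ℝ)..1, (g (x+1) u - g x u) = F (x+1) - F x :=
    intervalIntegral.integral_sub (g_intInt (by linarith)) (g_intInt hx)
  have h3 : ∫ u in (0:ℝ)..1, u ^ x = (x + 1)⁻¹ := by
    rw [integral_rpow (Or.inl (by linarith : (-1:ℝ) < x))]
    rw [Real.one_rpow, Real.zero_rpow (by linarith : x + 1 ≠ 0)]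
    rw [sub_zero, one_div]
  rw [h2, h3] at hint
  linarith

lemma F_nat (n : ℕ) : F n = harmonic n := by
  induction n with
  | zero => simpa using F_zero
  | succ n ih =>
    have := F_rec (x := n) (Nat.cast_nonneg n)
    push_cast
    rw [this, ih, harmonic_succ]
    push_cast
    ring

end HpProof

namespace HpProof

noncomputable def f : ℝ → ℝ := Real.log ∘ Real.Gamma

lemma f_diff {y : ℝ} (hy : 0 < y) : DifferentiableAt ℝ f y := by
  refine ((Real.differentiableAt_Gamma ?_).log (Real.Gamma_ne_zero ?_)) <;>
  exact fun m => ((neg_nonpos.mpr (Nat.cast_nonneg m)).trans_lt hy).ne'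

lemma f_rec {y : ℝ} (hy : 0 < y) : deriv f (y + 1) = deriv f y + 1 / y := by
  have h_rec : ∀ z : ℝ, 0 < z → f (z + 1) = f z + Real.log z := by
    intro z hz
    simp only [f, Function.comp_apply, Real.Gamma_add_one hz.ne',
      Real.log_mul hz.ne' (Real.Gamma_pos_of_pos hz).ne', add_comm]
  rw [← deriv_comp_add_const, one_div, ← Real.deriv_log,
    ← deriv_add (f_diff hy) (Real.differentiableAt_log hy.ne')]
  apply Filter.EventuallyEq.deriv_eq
  filter_upwards [eventually_gt_nhds hy] using h_rec

lemma f_deriv_mono {a b : ℝ} (ha : 0 < a) (hab : a ≤ b) : deriv f a ≤ deriv f b := by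
  rcases eq_or_lt_of_le hab with rfl | h
  · exact le_rfl
  · have hc : ConvexOn ℝ (Ioi 0) f := Real.convexOn_log_Gamma
    calc deriv f a ≤ slope f a b :=
          hc.deriv_le_slope (mem_Ioi.mpr ha) (mem_Ioi.mpr (ha.trans h)) h (f_diff ha)
      _ ≤ deriv f b :=
          hc.slope_le_deriv (mem_Ioi.mpr ha) (mem_Ioi.mpr (ha.trans h)) h (f_diff (ha.trans h))

lemma f_deriv_one : deriv f 1 = -Real.eulerMascheroniConstant := by
  have h : deriv f 1 = deriv Real.Gamma 1 / Real.Gamma 1 := by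
    unfold f
    rw [Function.comp_def, deriv.log (Real.differentiableAt_Gamma
      (fun m => ((neg_nonpos.mpr (Nat.cast_nonneg m)).trans_lt zero_lt_one).ne'))
      (by rw [Real.Gamma_one]; norm_num)]
  rw [h, Real.Gamma_one, div_one, Real.eulerMascheroniConstant_eq_neg_deriv, neg_neg]

noncomputable def D (x : ℝ) : ℝ := deriv f (x + 1) + Real.eulerMascheroniConstant

lemma D_zero : D 0 = 0 := by
  simp [D, f_deriv_one]

lemma D_rec {x : ℝ} (hx : 0 ≤ x) : D (x + 1) = D x + (x + 1)⁻¹ := by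
  unfold D
  rw [show x + 1 + 1 = (x + 1) + 1 from rfl, f_rec (by linarith), one_div]
  ring

lemma D_mono {x y : ℝ} (hx : 0 ≤ x) (hxy : x ≤ y) : D x ≤ D y := by
  unfold D
  have := f_deriv_mono (a := x + 1) (b := y + 1) (by linarith) (by linarith)
  linarith

lemma D_nat (n : ℕ) : D n = harmonic n := by
  induction n with
  | zero => simpa using D_zero
  | succ n ih =>
    have := D_rec (x := n) (Nat.cast_nonneg n)
    push_cast
    rw [this, ih, harmonic_succ]
    push_cast
    ring

end HpProof

namespace HpProof

lemma F_eq_D {x : ℝ} (hx : 0 < x) : F x = D x := by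
  set m := Nat.ceil x with hm
  have hm1 : 1 ≤ m := Nat.one_le_ceil_iff.mpr hx
  have hxm : x ≤ m := Nat.le_ceil x
  have hmx : (m:ℝ) - 1 ≤ x := by
    have := Nat.ceil_lt_add_one hx.le
    rw [← hm] at this
    linarith
  have hdiff : ∀ n : ℕ, F (x + n) - D (x + n) = F x - D x := by
    intro n; induction n with
    | zero => simp
    | succ n ih =>
      have hxn : (0:ℝ) ≤ x + n := by positivity
      push_cast
      rw [show x + ((n:ℝ) + 1) = (x + n) + 1 by ring, F_rec hxn, D_rec hxn, ← ih]
      ring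
  have hkey : ∀ n : ℕ, |F x - D x| ≤ 1 / ((n:ℝ) + 1) := by
    intro n
    set k := m - 1 + n with hk
    have hkc : (k:ℝ) = (m:ℝ) - 1 + n := by
      rw [hk]; push_cast [Nat.cast_sub hm1]; ring
    have hk1 : k + 1 = m + n := by omega
    have hkx : (k:ℝ) ≤ x + n := by rw [hkc]; linarith
    have hxk : x + n ≤ ((m + n : ℕ):ℝ) := by push_cast; linarith
    have hFl : (harmonic k : ℝ) ≤ F (x + n) := by
      rw [← F_nat]; exact F_mono (Nat.cast_nonneg k) hkx
    have hFu : F (x + n) ≤ (harmonic (m + n) : ℝ) := by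
      rw [← F_nat]; exact F_mono (by positivity) hxk
    have hDl : (harmonic k : ℝ) ≤ D (x + n) := by
      rw [← D_nat]; exact D_mono (Nat.cast_nonneg k) hkx
    have hDu : D (x + n) ≤ (harmonic (m + n) : ℝ) := by
      rw [← D_nat]; exact D_mono (by positivity) hxk
    have hh : (harmonic (m + n) : ℝ) = (harmonic k : ℝ) + 1 / ((k:ℝ) + 1) := by
      rw [← hk1, harmonic_succ]
      push_cast
      ring
    have hle : 1 / ((k:ℝ) + 1) ≤ 1 / ((n:ℝ) + 1) := by
      apply one_div_le_one_div_of_le (by positivity)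
      rw [hkc]
      have : (1:ℝ) ≤ m := by exact_mod_cast hm1
      linarith
    rw [← hdiff n, abs_sub_le_iff]
    constructor <;> linarith
  have h0 : |F x - D x| ≤ 0 :=
    ge_of_tendsto tendsto_one_div_add_atTop_nhds_zero_nat
      (Filter.Eventually.of_forall hkey)
  have := abs_nonneg (F x - D x)
  have : |F x - D x| = 0 := le_antisymm h0 this
  rw [abs_eq_zero] at this
  linarith

end HpProof

theorem Hp_digamma_bounds (p x : ℝ) (hp : p ∈ Set.Ioo (0:ℝ) 1) (hx : 0 < x) :
    digamma (x + 1) + Real.eulerMascheroniConstant + Real.log p ≤ Hp p x ∧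
      Hp p x ≤ digamma (x + 1) + Real.eulerMascheroniConstant := by
  obtain ⟨hp0, hp1⟩ := hp
  have hFD : HpProof.F x = digamma (x + 1) + Real.eulerMascheroniConstant := HpProof.F_eq_D hx
  -- substitution u = p*t + (1-p)
  have hsub : Hp p x = ∫ u in (1 - p : ℝ)..1, HpProof.g x u := by
    have h1 : Hp p x = ∫ t in (0:ℝ)..1, p * HpProof.g x (p * t + (1 - p)) := by
      unfold Hp HpProof.g
      congr 1
      funext t
      rw [show (1:ℝ) - (p * t + (1 - p)) = p * (1 - t) by ring,
        show (1:ℝ) - p + p * t = p * t + (1 - p) by ring,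
        ← mul_div_assoc, mul_div_mul_left _ _ hp0.ne']
    have h3 : ∫ t in (0:ℝ)..1, HpProof.g x (p * t + (1 - p))
        = p⁻¹ • ∫ u in (p * 0 + (1 - p))..(p * 1 + (1 - p)), HpProof.g x u :=
      intervalIntegral.integral_comp_mul_add (HpProof.g x) hp0.ne' (1 - p)
    rw [h1, intervalIntegral.integral_const_mul, h3, smul_eq_mul,
      show p * 0 + (1 - p) = 1 - p by ring, show p * 1 + (1 - p) = 1 by ring,
      ← mul_assoc, mul_inv_cancel₀ hp0.ne', one_mul]
  have hi1 : IntervalIntegrable (HpProof.g x) volume 0 (1 - p) :=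
    (HpProof.g_intInt hx.le).mono_set (by
      apply Set.uIcc_subset_uIcc <;> rw [Set.uIcc_of_le (by linarith : (0:ℝ) ≤ 1)]
      · exact ⟨le_rfl, zero_le_one⟩
      · exact ⟨by linarith, by linarith⟩)
  have hi2 : IntervalIntegrable (HpProof.g x) volume (1 - p) 1 :=
    (HpProof.g_intInt hx.le).mono_set (by
      apply Set.uIcc_subset_uIcc <;> rw [Set.uIcc_of_le (by linarith : (0:ℝ) ≤ 1)]
      · exact ⟨by linarith, by linarith⟩
      · exact ⟨zero_le_one, le_rfl⟩)
  have hadj : (∫ u in (0:ℝ)..(1 - p), HpProof.g x u) + (∫ u in (1 - p : ℝ)..1, HpProof.g x u)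
      = HpProof.F x := intervalIntegral.integral_add_adjacent_intervals hi1 hi2
  set J := ∫ u in (0:ℝ)..(1 - p), HpProof.g x u with hJ
  have hJ0 : 0 ≤ J := by
    apply intervalIntegral.integral_nonneg (by linarith)
    intro u hu
    exact HpProof.g_nonneg hx.le ⟨hu.1, by linarith [hu.2]⟩
  have hJub : J ≤ -Real.log p := by
    have hcont : IntervalIntegrable (fun u : ℝ => (1 - u)⁻¹) volume 0 (1 - p) := by
      apply ContinuousOn.intervalIntegrable
      apply ContinuousOn.inv₀ ((continuous_const.sub continuous_id).continuousOn)
      intro u hu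
      rw [Set.uIcc_of_le (by linarith : (0:ℝ) ≤ 1 - p)] at hu
      have := hu.2
      intro h; have h' : (1:ℝ) - u = 0 := h; nlinarith
    have hle : J ≤ ∫ u in (0:ℝ)..(1 - p), (1 - u)⁻¹ := by
      apply intervalIntegral.integral_mono_on (by linarith) hi1 hcont
      intro u hu
      have h1u : 0 < 1 - u := by nlinarith [hu.2]
      rw [HpProof.g, ← one_div (1 - u), div_le_div_iff_of_pos_right h1u]
      nlinarith [Real.rpow_nonneg hu.1 x]
    have hcalc : ∫ u in (0:ℝ)..(1 - p), (1 - u)⁻¹ = -Real.log p := by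
      have h4 : ∫ u in (0:ℝ)..(1 - p), (fun v : ℝ => v⁻¹) (1 - u)
          = ∫ v in (1 - (1 - p) : ℝ)..(1 - 0 : ℝ), v⁻¹ :=
        intervalIntegral.integral_comp_sub_left (fun v : ℝ => v⁻¹) 1
      simp only [show (1:ℝ) - (1 - p) = p by ring, sub_zero] at h4
      rw [show (fun u : ℝ => (1 - u)⁻¹) = fun u : ℝ => (fun v : ℝ => v⁻¹) (1 - u) from rfl]
      rw [h4, integral_inv_of_pos hp0 one_pos, Real.log_div one_ne_zero hp0.ne',
        Real.log_one, zero_sub]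
    linarith
  have hHp : Hp p x = HpProof.F x - J := by rw [hsub, ← hadj]; ring
  constructor <;> [linarith; linarith]
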